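/- For the surface z(u,v) = f(u)ω(v)cos(v) e₁ + f(u)ω(v)sin(v) e₂ + (f(u)ω(v)²/2 + g(u)) ξ₁ + f(u) ξ₂ in Minkowski space ℝ⁴₁, with f(u) = u, g(u) = -(1/2)((u²+2u)/(1+u) - 2ln(1+u)), ω(v) = 2cos v, the coefficients of the first fundamental form are E = ⟨z_u, z_u⟩ = u²/(u+1)², F = ⟨z_u, z_v⟩ = 0, G = ⟨z_v, z_v⟩ = 4u², where ⟨·,·⟩ is the Minkowski inner product. -/

import Mathlib

open Real

/-- Minkowski inner product in the pseudo-orthonormal basis {e₁, e₂, ξ₁, ξ₂}: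
coordinates a = a₀ e₁ + a₁ e₂ + a₂ ξ₁ + a₃ ξ₂, with ⟨e₁,e₁⟩ = ⟨e₂,e₂⟩ = 1,
⟨ξ₁,ξ₁⟩ = ⟨ξ₂,ξ₂⟩ = 0, ⟨ξ₁,ξ₂⟩ = -1, e's orthogonal to ξ's. -/
def mink (a b : Fin 4 → ℝ) : ℝ :=
  a 0 * b 0 + a 1 * b 1 - a 2 * b 3 - a 3 * b 2

theorem stmt8 (f g ω : ℝ → ℝ)
    (hf : ∀ u, f u = u)
    (hg : ∀ u, g u = -(1/2) * ((u^2 + 2*u)/(1+u) - 2 * Real.log (1+u)))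
    (hω : ∀ v, ω v = 2 * Real.cos v)
    (z : ℝ × ℝ → Fin 4 → ℝ)
    (hz : ∀ p : ℝ × ℝ, z p =
      ![f p.1 * ω p.2 * Real.cos p.2,
        f p.1 * ω p.2 * Real.sin p.2,
        f p.1 * (ω p.2)^2 / 2 + g p.1,
        f p.1])
    (zu zv : ℝ × ℝ → Fin 4 → ℝ)
    (hzu : ∀ p i, zu p i = deriv (fun x => z (x, p.2) i) p.1)
    (hzv : ∀ p i, zv p i = deriv (fun y => z (p.1, y) i) p.2) :
    ∀ p : ℝ × ℝ, 0 < p.1 → Real.cos p.2 ≠ 0 →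
      mink (zu p) (zu p) = p.1^2 / (p.1 + 1)^2
      ∧ mink (zu p) (zv p) = 0
      ∧ mink (zv p) (zv p) = 4 * p.1^2 := by
  rintro ⟨u, v⟩ hu hcv
  simp only at hu hcv ⊢
  have hne : (1 : ℝ) + u ≠ 0 := by positivity
  -- explicit component formulas
  have hz0 : ∀ x y : ℝ, z (x, y) 0 = x * (2 * Real.cos y) * Real.cos y := by
    intro x y; rw [hz]; simp [hf, hω]
  have hz1 : ∀ x y : ℝ, z (x, y) 1 = x * (2 * Real.cos y) * Real.sin y := by
    intro x y; rw [hz]; simp [hf, hω]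
  have hz2 : ∀ x y : ℝ, z (x, y) 2 =
      x * (2 * Real.cos y) ^ 2 / 2 +
        (-(1/2) * ((x^2 + 2*x)/(1+x) - 2 * Real.log (1+x))) := by
    intro x y; rw [hz]; simp [hf, hg, hω]
  have hz3 : ∀ x y : ℝ, z (x, y) 3 = x := by
    intro x y; rw [hz]; simp [hf]
  set c := Real.cos v with hc
  set s := Real.sin v with hs
  -- u-derivatives
  have hU0 : HasDerivAt (fun x => z (x, v) 0) (1 * (2 * c) * c) u := by
    have : HasDerivAt (fun x : ℝ => x * (2 * c) * c) (1 * (2 * c) * c) u :=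
      ((hasDerivAt_id u).mul_const (2 * c)).mul_const c
    exact this.congr_of_eventuallyEq (Filter.Eventually.of_forall fun x => (hz0 x v))
  have hU1 : HasDerivAt (fun x => z (x, v) 1) (1 * (2 * c) * s) u := by
    have : HasDerivAt (fun x : ℝ => x * (2 * c) * s) (1 * (2 * c) * s) u :=
      ((hasDerivAt_id u).mul_const (2 * c)).mul_const s
    exact this.congr_of_eventuallyEq (Filter.Eventually.of_forall fun x => (hz1 x v))
  have hden : HasDerivAt (fun x : ℝ => 1 + x) 1 u := by
    simpa using (hasDerivAt_id u).const_add 1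
  have hnum : HasDerivAt (fun x : ℝ => x^2 + 2*x) (2 * u ^ 1 + 2) u := by
    have h1 : HasDerivAt (fun x : ℝ => 2 * x) 2 u := by
      simpa using (hasDerivAt_id u).const_mul (2:ℝ)
    exact (hasDerivAt_pow 2 u).add h1
  have hdiv : HasDerivAt (fun x : ℝ => (x^2 + 2*x)/(1+x))
      (((2 * u ^ 1 + 2) * (1 + u) - (u^2 + 2*u) * 1) / (1 + u)^2) u :=
    hnum.div hden hne
  have hlog : HasDerivAt (fun x : ℝ => Real.log (1 + x)) ((1 + u)⁻¹ * 1) u :=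
    (Real.hasDerivAt_log hne).comp u hden
  have hgd : HasDerivAt (fun x : ℝ => -(1/2) * ((x^2 + 2*x)/(1+x) - 2 * Real.log (1+x)))
      (-(1/2) * ((((2 * u ^ 1 + 2) * (1 + u) - (u^2 + 2*u) * 1) / (1 + u)^2)
        - 2 * ((1 + u)⁻¹ * 1))) u :=
    (hdiv.sub (hlog.const_mul 2)).const_mul (-(1/2))
  have hU2 : HasDerivAt (fun x => z (x, v) 2)
      ((1 * (2 * c) ^ 2 / 2) +
        (-(1/2) * ((((2 * u ^ 1 + 2) * (1 + u) - (u^2 + 2*u) * 1) / (1 + u)^2)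
          - 2 * ((1 + u)⁻¹ * 1)))) u := by
    have : HasDerivAt (fun x : ℝ => x * (2 * c) ^ 2 / 2 +
        (-(1/2) * ((x^2 + 2*x)/(1+x) - 2 * Real.log (1+x))))
        ((1 * (2 * c) ^ 2 / 2) +
          (-(1/2) * ((((2 * u ^ 1 + 2) * (1 + u) - (u^2 + 2*u) * 1) / (1 + u)^2)
            - 2 * ((1 + u)⁻¹ * 1)))) u :=
      (((hasDerivAt_id u).mul_const ((2 * c) ^ 2)).div_const 2).add hgd
    exact this.congr_of_eventuallyEq (Filter.Eventually.of_forall fun x => (hz2 x v))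
  have hU3 : HasDerivAt (fun x => z (x, v) 3) 1 u := by
    exact (hasDerivAt_id u).congr_of_eventuallyEq
      (Filter.Eventually.of_forall fun x => (hz3 x v))
  -- v-derivatives
  have hcos : HasDerivAt Real.cos (-s) v := Real.hasDerivAt_cos v
  have hsin : HasDerivAt Real.sin c v := Real.hasDerivAt_sin v
  have hV0 : HasDerivAt (fun y => z (u, y) 0)
      (u * (2 * -s) * c + u * (2 * c) * -s) v := by
    have : HasDerivAt (fun y : ℝ => u * (2 * Real.cos y) * Real.cos y)
        (u * (2 * -s) * c + u * (2 * c) * -s) v :=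
      ((hcos.const_mul 2).const_mul u).mul hcos
    exact this.congr_of_eventuallyEq (Filter.Eventually.of_forall fun y => (hz0 u y))
  have hV1 : HasDerivAt (fun y => z (u, y) 1)
      (u * (2 * -s) * s + u * (2 * c) * c) v := by
    have : HasDerivAt (fun y : ℝ => u * (2 * Real.cos y) * Real.sin y)
        (u * (2 * -s) * s + u * (2 * c) * c) v :=
      ((hcos.const_mul 2).const_mul u).mul hsin
    exact this.congr_of_eventuallyEq (Filter.Eventually.of_forall fun y => (hz1 u y))
  have hV2 : HasDerivAt (fun y => z (u, y) 2)
      (u * (2 * (2 * Real.cos v) ^ 1 * (2 * -s)) / 2) v := by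
    have : HasDerivAt (fun y : ℝ => u * (2 * Real.cos y) ^ 2 / 2 +
        (-(1/2) * ((u^2 + 2*u)/(1+u) - 2 * Real.log (1+u))))
        (u * (2 * (2 * Real.cos v) ^ 1 * (2 * -s)) / 2) v := by
      have h := ((((hcos.const_mul 2).pow 2).const_mul u).div_const 2).add_const
        (-(1/2) * ((u^2 + 2*u)/(1+u) - 2 * Real.log (1+u)))
      simpa using h
    exact this.congr_of_eventuallyEq (Filter.Eventually.of_forall fun y => (hz2 u y))
  have hV3 : HasDerivAt (fun y => z (u, y) 3) 0 v := by
    exact (hasDerivAt_const v u).congr_of_eventuallyEq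
      (Filter.Eventually.of_forall fun y => (hz3 u y))
  have pyth : s ^ 2 + c ^ 2 = 1 := Real.sin_sq_add_cos_sq v
  have e0 : zu (u, v) 0 = 1 * (2 * c) * c := by rw [hzu]; exact hU0.deriv
  have e1 : zu (u, v) 1 = 1 * (2 * c) * s := by rw [hzu]; exact hU1.deriv
  have e2 : zu (u, v) 2 = (1 * (2 * c) ^ 2 / 2) +
      (-(1/2) * ((((2 * u ^ 1 + 2) * (1 + u) - (u^2 + 2*u) * 1) / (1 + u)^2)
        - 2 * ((1 + u)⁻¹ * 1))) := by rw [hzu]; exact hU2.deriv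
  have e3 : zu (u, v) 3 = 1 := by rw [hzu]; exact hU3.deriv
  have w0 : zv (u, v) 0 = u * (2 * -s) * c + u * (2 * c) * -s := by
    rw [hzv]; exact hV0.deriv
  have w1 : zv (u, v) 1 = u * (2 * -s) * s + u * (2 * c) * c := by
    rw [hzv]; exact hV1.deriv
  have w2 : zv (u, v) 2 = u * (2 * (2 * Real.cos v) ^ 1 * (2 * -s)) / 2 := by
    rw [hzv]; exact hV2.deriv
  have w3 : zv (u, v) 3 = 0 := by rw [hzv]; exact hV3.deriv
  refine ⟨?_, ?_, ?_⟩
  · rw [mink, e0, e1, e2, e3]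
    field_simp
    linear_combination (8*c^2*(1+u)^4) * pyth
  · rw [mink, e0, e1, e2, e3, w0, w1, w2, w3]
    linear_combination (-4*c*u*s) * pyth
  · rw [mink, w0, w1, w2, w3]
    linear_combination (4*u^2*(s^2+c^2+1)) * pyth
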